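/- arXiv:2211.11223 — 2 statements merged into one kernel-verified Lean document; each statement's English description precedes it below -/
import Mathlib

section
/- Let 0 < β < α < 1 and θ > -β. For every positive integer k, ∑_{j=1}^{k} P^{(k)}_{β/α,0}(j) · Γ(θ/β + j)/(Γ(θ/β + 1)Γ(j)) = Γ(θ/α + k)/(Γ(θ/α + 1)Γ(k)), where P^{(k)}_{σ,0}(j) = (σ^{j-1}Γ(j)/Γ(k)) S_σ(k,j) is the distribution of the number of blocks of a PD(σ,0) partition of [k]. -/
open Finset

/-- Rising factorial (Pochhammer symbol). -/
noncomputable def risingFactorial (x : ℝ) (n : ℕ) : ℝ :=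
  ∏ i ∈ Finset.range n, (x + i)

/-- Generalized Stirling number of the second kind. -/
noncomputable def genStirling (σ : ℝ) (n k : ℕ) : ℝ :=
  (1 / (σ ^ k * (Nat.factorial k : ℝ))) *
    ∑ j ∈ Finset.Icc 1 k, (-1 : ℝ) ^ j * (Nat.choose k j : ℝ) *
      risingFactorial (-(j * σ)) n

/-- `P^{(k)}_{σ,0}(j)`: distribution of the number of blocks of a `PD(σ,0)`
partition of `[k]`. -/
noncomputable def numBlocksPD (σ : ℝ) (k j : ℕ) : ℝ :=
  σ ^ (j - 1) * Real.Gamma j * genStirling σ k j / Real.Gamma k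

section Aux
open Polynomial

noncomputable def Tsum (σ : ℝ) (k j : ℕ) : ℝ :=
  ∑ i ∈ Icc 1 j, (-1:ℝ)^i * ((j.choose i):ℝ) * risingFactorial (-(↑i * σ)) k

noncomputable def Ppoly (σ : ℝ) (k : ℕ) : Polynomial ℝ :=
  ∑ j ∈ Icc 1 k, Polynomial.C (Tsum σ k j / (j.factorial : ℝ)) *
    ∏ i ∈ range j, (Polynomial.X + Polynomial.C (i:ℝ))

noncomputable def Qpoly (σ : ℝ) (k : ℕ) : Polynomial ℝ :=
  ∏ i ∈ range k, (Polynomial.C σ * Polynomial.X + Polynomial.C (i:ℝ))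

lemma alt_sum_choose_real (n : ℕ) :
    ∑ t ∈ range (n+1), (-1:ℝ)^t * ((n.choose t):ℝ) = if n = 0 then 1 else 0 := by
  have h := Int.alternating_sum_range_choose (n := n)
  have h2 : ((∑ i ∈ range (n+1), (-1:ℤ)^i * (n.choose i) : ℤ) : ℝ)
      = ((if n = 0 then 1 else 0 : ℤ) : ℝ) := by rw [h]
  push_cast at h2
  convert h2 using 2

lemma prod_range_sub_nat (m : ℕ) : ∀ j : ℕ,
    ∏ i ∈ range j, ((i:ℝ) - m) = (-1)^j * (j.factorial) * (m.choose j)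
  | 0 => by simp
  | (j+1) => by
      rw [Finset.prod_range_succ, prod_range_sub_nat m j]
      rcases lt_trichotomy j m with h | h | h
      · have hc := Nat.choose_succ_right_eq m j
        have hcast : ((m.choose (j+1)) : ℝ) * (j+1) = (m.choose j) * ((m:ℝ) - j) := by
          have := congrArg (fun x : ℕ => (x:ℝ)) hc
          push_cast [Nat.cast_sub h.le] at this
          simpa using this
        push_cast [Nat.factorial_succ]
        linear_combination ((-1:ℝ)^j * (j.factorial:ℝ)) * hcast
      · subst h
        simp [Nat.choose_eq_zero_of_lt (Nat.lt_succ_self j)]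
      · rw [Nat.choose_eq_zero_of_lt h, Nat.choose_eq_zero_of_lt (h.trans (Nat.lt_succ_self j))]
        ring

lemma delta_sum (k m i : ℕ) (hi : 1 ≤ i) (hm : m ≤ k) :
    ∑ j ∈ Icc 1 k, (-1:ℝ)^j * ((m.choose j):ℝ) * ((j.choose i):ℝ)
      = if i = m then (-1:ℝ)^m else 0 := by
  rcases le_or_gt i m with him | him
  · rw [← Finset.sum_subset (Finset.Icc_subset_Icc hi hm)
      (fun j hj hj' => by
        rcases lt_or_ge j i with h | h
        · simp [Nat.choose_eq_zero_of_lt h]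
        · have : m < j := by simp only [mem_Icc] at hj hj'; omega
          simp [Nat.choose_eq_zero_of_lt this])]
    have hIcc : Finset.Icc i m = Finset.Ico i (m+1) := by rfl
    rw [hIcc, Finset.sum_Ico_eq_sum_range]
    have hrng : m + 1 - i = (m - i) + 1 := by omega
    rw [hrng]
    have hterm : ∀ t ∈ range ((m - i) + 1),
        (-1:ℝ)^(i+t) * ((m.choose (i+t)):ℝ) * (((i+t).choose i):ℝ)
        = ((-1:ℝ)^i * (m.choose i)) * ((-1:ℝ)^t * ((m-i).choose t)) := by
      intro t ht
      simp only [mem_range] at ht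
      have h1 : i + t ≤ m := by omega
      have h2 := Nat.choose_mul (n := m) (Nat.le_add_right i t)
      have h2c : ((m.choose (i+t)):ℝ) * (((i+t).choose i):ℝ)
          = ((m.choose i):ℝ) * (((m-i).choose ((i+t)-i)):ℝ) := by exact_mod_cast h2
      have h3 : (i+t) - i = t := by omega
      rw [h3] at h2c
      rw [pow_add]
      linear_combination ((-1:ℝ)^i * (-1:ℝ)^t) * h2c
    rw [Finset.sum_congr rfl hterm, ← Finset.mul_sum, alt_sum_choose_real]
    rcases eq_or_lt_of_le him with h | h
    · subst h
      simp
    · have : m - i ≠ 0 := by omega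
      simp [this, ne_of_lt h]
  · rw [if_neg (by omega)]
    apply Finset.sum_eq_zero
    intro j hj
    rcases lt_or_ge j i with h | h
    · simp [Nat.choose_eq_zero_of_lt h]
    · have : m < j := lt_of_lt_of_le him h
      simp [Nat.choose_eq_zero_of_lt this]

lemma eval_Ppoly (σ : ℝ) (k : ℕ) (hk : 1 ≤ k) (m : ℕ) (hm : m ≤ k) :
    (Ppoly σ k).eval (-(m:ℝ)) = risingFactorial (-(↑m * σ)) k := by
  have step1 : (Ppoly σ k).eval (-(m:ℝ))
      = ∑ j ∈ Icc 1 k, (-1:ℝ)^j * (m.choose j) * Tsum σ k j := by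
    rw [Ppoly, eval_finset_sum]
    refine Finset.sum_congr rfl fun j hj => ?_
    rw [eval_mul, eval_C, eval_prod]
    have : ∏ i ∈ range j, (Polynomial.X + Polynomial.C (i:ℝ)).eval (-(m:ℝ))
        = ∏ i ∈ range j, ((i:ℝ) - m) := by
      refine Finset.prod_congr rfl fun i _ => ?_
      simp; ring
    rw [this, prod_range_sub_nat]
    have hjf : (j.factorial : ℝ) ≠ 0 := by positivity
    field_simp
  rw [step1]
  -- expand Tsum and swap
  have step2 : ∑ j ∈ Icc 1 k, (-1:ℝ)^j * (m.choose j) * Tsum σ k j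
      = ∑ j ∈ Icc 1 k, ∑ i ∈ Icc 1 k,
          (-1:ℝ)^j * (m.choose j) * ((-1:ℝ)^i * (j.choose i) * risingFactorial (-(↑i * σ)) k) := by
    refine Finset.sum_congr rfl fun j hj => ?_
    simp only [mem_Icc] at hj
    rw [Tsum, Finset.mul_sum]
    refine Finset.sum_subset (Finset.Icc_subset_Icc le_rfl hj.2) fun i hi hi' => ?_
    have : j < i := by simp only [mem_Icc] at hi hi'; omega
    simp [Nat.choose_eq_zero_of_lt this]
  rw [step2, Finset.sum_comm]
  have step3 : ∀ i ∈ Icc 1 k,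
      ∑ j ∈ Icc 1 k, (-1:ℝ)^j * (m.choose j) *
          ((-1:ℝ)^i * (j.choose i) * risingFactorial (-(↑i * σ)) k)
      = (if i = m then (-1:ℝ)^m else 0) * ((-1:ℝ)^i * risingFactorial (-(↑i * σ)) k) := by
    intro i hi
    simp only [mem_Icc] at hi
    have : ∑ j ∈ Icc 1 k, (-1:ℝ)^j * (m.choose j) *
          ((-1:ℝ)^i * (j.choose i) * risingFactorial (-(↑i * σ)) k)
        = (∑ j ∈ Icc 1 k, (-1:ℝ)^j * (m.choose j) * (j.choose i)) *
            ((-1:ℝ)^i * risingFactorial (-(↑i * σ)) k) := by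
      rw [Finset.sum_mul]; refine Finset.sum_congr rfl fun j _ => by ring
    rw [this, delta_sum k m i hi.1 hm]
  rw [Finset.sum_congr rfl step3]
  simp only [ite_mul, zero_mul]
  rw [Finset.sum_ite_eq' (Icc 1 k) m (fun i => (-1:ℝ)^m * ((-1:ℝ)^i * risingFactorial (-(↑i * σ)) k))]
  by_cases hm1 : 1 ≤ m
  · rw [if_pos (by simp [mem_Icc]; omega)]
    have : (-1:ℝ)^m * (-1:ℝ)^m = 1 := by
      rw [← pow_add]
      exact Even.neg_one_pow ⟨m, rfl⟩
    rw [← mul_assoc, this, one_mul]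
  · have hm0 : m = 0 := by omega
    subst hm0
    rw [if_neg (by simp)]
    rw [risingFactorial]
    symm
    apply Finset.prod_eq_zero (Finset.mem_range.mpr (by omega : 0 < k))
    simp

lemma Ppoly_eq_Qpoly (σ : ℝ) (k : ℕ) (hk : 1 ≤ k) : Ppoly σ k = Qpoly σ k := by
  have hdegP : (Ppoly σ k).natDegree ≤ k := by
    refine Polynomial.natDegree_sum_le_of_forall_le _ _ fun j hj => ?_
    simp only [mem_Icc] at hj
    calc (Polynomial.C (Tsum σ k j / (j.factorial:ℝ)) *
            ∏ i ∈ range j, (Polynomial.X + Polynomial.C (i:ℝ))).natDegree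
        ≤ (∏ i ∈ range j, (Polynomial.X + Polynomial.C (i:ℝ))).natDegree :=
          Polynomial.natDegree_C_mul_le _ _
      _ ≤ ∑ i ∈ range j, (Polynomial.X + Polynomial.C (i:ℝ)).natDegree :=
          Polynomial.natDegree_prod_le _ _
      _ ≤ ∑ i ∈ range j, 1 := by
          apply Finset.sum_le_sum
          intro i _
          exact (Polynomial.natDegree_X_add_C _).le
      _ = j := by simp
      _ ≤ k := hj.2
  have hdegQ : (Qpoly σ k).natDegree ≤ k := by
    rw [Qpoly]
    calc (∏ i ∈ range k, (Polynomial.C σ * Polynomial.X + Polynomial.C (i:ℝ))).natDegree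
        ≤ ∑ i ∈ range k, (Polynomial.C σ * Polynomial.X + Polynomial.C (i:ℝ)).natDegree :=
          Polynomial.natDegree_prod_le _ _
      _ ≤ ∑ i ∈ range k, 1 := by
          apply Finset.sum_le_sum
          intro i _
          refine le_trans (Polynomial.natDegree_add_le _ _) ?_
          simp only [Polynomial.natDegree_C, max_le_iff]
          constructor
          · exact le_trans (Polynomial.natDegree_C_mul_le _ _) (by simp)
          · omega
      _ = k := by simp
  have heval : ∀ i : Fin (k+1), (Ppoly σ k - Qpoly σ k).eval (-(i:ℝ)) = 0 := by
    intro i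
    have hik : (i:ℕ) ≤ k := by omega
    rw [Polynomial.eval_sub, eval_Ppoly σ k hk i hik, sub_eq_zero]
    rw [Qpoly, eval_prod, risingFactorial]
    refine Finset.prod_congr rfl fun t _ => ?_
    simp; ring
  have hz : Ppoly σ k - Qpoly σ k = 0 := by
    refine Polynomial.eq_zero_of_natDegree_lt_card_of_eval_eq_zero _
      (f := fun i : Fin (k+1) => -(i:ℝ)) ?_ heval ?_
    · intro a b hab
      have : ((a:ℕ):ℝ) = ((b:ℕ):ℝ) := by
        have := neg_injective hab; exact_mod_cast this
      exact Fin.ext (by exact_mod_cast this)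
    · calc (Ppoly σ k - Qpoly σ k).natDegree
          ≤ max (Ppoly σ k).natDegree (Qpoly σ k).natDegree := Polynomial.natDegree_sub_le _ _
        _ ≤ k := max_le hdegP hdegQ
        _ < k + 1 := Nat.lt_succ_self k
        _ = Fintype.card (Fin (k+1)) := (Fintype.card_fin _).symm
  exact sub_eq_zero.mp hz

lemma key_identity (σ : ℝ) (k : ℕ) (hk : 1 ≤ k) (x : ℝ) :
    ∑ j ∈ Icc 1 k, (Tsum σ k j / (j.factorial:ℝ)) * ∏ i ∈ range (j-1), (x + ((i:ℝ)+1))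
      = σ * ∏ i ∈ range (k-1), (σ * x + ((i:ℝ)+1)) := by
  -- factor X out of Ppoly and Qpoly
  have hfac : ∀ j : ℕ, 1 ≤ j →
      ∏ i ∈ range j, (Polynomial.X + Polynomial.C (i:ℝ))
        = Polynomial.X * ∏ i ∈ range (j-1), (Polynomial.X + Polynomial.C ((i:ℝ)+1)) := by
    intro j hj
    obtain ⟨j', rfl⟩ : ∃ j', j = j' + 1 := ⟨j - 1, by omega⟩
    rw [Finset.prod_range_succ']
    simp only [Nat.add_sub_cancel, Nat.cast_add, Nat.cast_one, Nat.cast_zero, Polynomial.C_0,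
      add_zero, Polynomial.C_add, Polynomial.C_1]
    ring
  have hfacQ : Qpoly σ k = (Polynomial.C σ * Polynomial.X) *
      ∏ i ∈ range (k-1), (Polynomial.C σ * Polynomial.X + Polynomial.C ((i:ℝ)+1)) := by
    rw [Qpoly]
    obtain ⟨k', rfl⟩ : ∃ k', k = k' + 1 := ⟨k - 1, by omega⟩
    rw [Finset.prod_range_succ']
    simp only [Nat.add_sub_cancel, Nat.cast_add, Nat.cast_one, Nat.cast_zero, Polynomial.C_0,
      add_zero, Polynomial.C_add, Polynomial.C_1]
    ring
  have hP : Ppoly σ k = Polynomial.X *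
      ∑ j ∈ Icc 1 k, Polynomial.C (Tsum σ k j / (j.factorial:ℝ)) *
        ∏ i ∈ range (j-1), (Polynomial.X + Polynomial.C ((i:ℝ)+1)) := by
    rw [Ppoly, Finset.mul_sum]
    refine Finset.sum_congr rfl fun j hj => ?_
    simp only [mem_Icc] at hj
    rw [hfac j hj.1]; ring
  have hPQ := Ppoly_eq_Qpoly σ k hk
  rw [hP, hfacQ] at hPQ
  have hcancel : (∑ j ∈ Icc 1 k, Polynomial.C (Tsum σ k j / (j.factorial:ℝ)) *
        ∏ i ∈ range (j-1), (Polynomial.X + Polynomial.C ((i:ℝ)+1)))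
      = Polynomial.C σ *
        ∏ i ∈ range (k-1), (Polynomial.C σ * Polynomial.X + Polynomial.C ((i:ℝ)+1)) := by
    apply mul_left_cancel₀ (Polynomial.X_ne_zero (R := ℝ))
    rw [hPQ]; ring
  have := congrArg (Polynomial.eval x) hcancel
  simpa [Polynomial.eval_finset_sum, Polynomial.eval_prod] using this

lemma Gamma_shift (x : ℝ) (hx : 0 < x) : ∀ n : ℕ,
    Real.Gamma (x + n) = (∏ i ∈ range n, (x + i)) * Real.Gamma x
  | 0 => by simp
  | (n+1) => by
      have h1 : x + (n+1:ℕ) = (x + n) + 1 := by push_cast; ring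
      rw [h1, Real.Gamma_add_one (by positivity), Gamma_shift x hx n,
        Finset.prod_range_succ]
      ring


end Aux

theorem frag_EPPF_consistency (α β θ : ℝ) (hβ : 0 < β) (hβα : β < α) (hα : α < 1)
    (hθ : -β < θ) (k : ℕ) (hk : 1 ≤ k) :
    ∑ j ∈ Finset.Icc 1 k,
        numBlocksPD (β / α) k j *
          (Real.Gamma (θ / β + j) / (Real.Gamma (θ / β + 1) * Real.Gamma j))
      = Real.Gamma (θ / α + k) / (Real.Gamma (θ / α + 1) * Real.Gamma k) := by
  have hα0 : 0 < α := hβ.trans hβα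
  set σ : ℝ := β / α with hσdef
  set x0 : ℝ := θ / β with hx0def
  set y0 : ℝ := θ / α with hy0def
  have hσpos : 0 < σ := by positivity
  have hσ : σ ≠ 0 := ne_of_gt hσpos
  have hx1 : 0 < x0 + 1 := by
    rw [hx0def]
    have : θ / β + 1 = (θ + β) / β := by field_simp
    rw [this]; apply div_pos (by linarith) hβ
  have hy1 : 0 < y0 + 1 := by
    rw [hy0def]
    have : θ / α + 1 = (θ + α) / α := by field_simp
    rw [this]; apply div_pos (by linarith) hα0
  have hσx : σ * x0 = y0 := by
    rw [hσdef, hx0def, hy0def]; field_simp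
  have hGx1 : Real.Gamma (x0 + 1) ≠ 0 := ne_of_gt (Real.Gamma_pos_of_pos hx1)
  have hGy1 : Real.Gamma (y0 + 1) ≠ 0 := ne_of_gt (Real.Gamma_pos_of_pos hy1)
  have hGk : Real.Gamma (k : ℝ) = ((k-1).factorial : ℝ) := by
    have : (k:ℝ) = ((k-1:ℕ):ℝ) + 1 := by
      have : k = (k-1) + 1 := by omega
      rw [this]; push_cast; ring
    rw [this, Real.Gamma_nat_eq_factorial]
  -- transform each term of the LHS
  have hterm : ∀ j ∈ Icc 1 k,
      numBlocksPD σ k j * (Real.Gamma (x0 + j) / (Real.Gamma (x0 + 1) * Real.Gamma j))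
      = (1 / (σ * ((k-1).factorial : ℝ))) *
          ((Tsum σ k j / (j.factorial : ℝ)) * ∏ i ∈ range (j-1), (x0 + ((i:ℝ)+1))) := by
    intro j hj
    simp only [mem_Icc] at hj
    obtain ⟨j', rfl⟩ : ∃ j', j = j' + 1 := ⟨j - 1, by omega⟩
    have hGj : Real.Gamma ((j'+1 : ℕ) : ℝ) = (j'.factorial : ℝ) := by
      push_cast; rw [Real.Gamma_nat_eq_factorial]
    have hGxj : Real.Gamma (x0 + ((j'+1:ℕ):ℝ))
        = (∏ i ∈ range j', ((x0+1) + i)) * Real.Gamma (x0 + 1) := by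
      have h1 : x0 + ((j'+1:ℕ):ℝ) = (x0 + 1) + (j' : ℕ) := by push_cast; ring
      rw [h1, Gamma_shift (x0+1) hx1 j']
    have hgen : genStirling σ k (j'+1)
        = (1 / (σ ^ (j'+1) * ((j'+1).factorial : ℝ))) * Tsum σ k (j'+1) := rfl
    rw [numBlocksPD, hGj, hGxj, hgen, hGk]
    have hprod : ∏ i ∈ range j', ((x0+1) + (i:ℝ))
        = ∏ i ∈ range ((j'+1)-1), (x0 + ((i:ℝ)+1)) := by
      simp only [Nat.add_sub_cancel]
      exact Finset.prod_congr rfl fun i _ => by ring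
    rw [hprod]
    have hjf : ((j'+1).factorial : ℝ) ≠ 0 := by positivity
    have hj'f : (j'.factorial : ℝ) ≠ 0 := by positivity
    have hkf : (((k-1).factorial : ℕ) : ℝ) ≠ 0 := by positivity
    have hσp : σ ^ (j'+1) ≠ 0 := pow_ne_zero _ hσ
    simp only [Nat.add_sub_cancel]
    field_simp
    ring
  rw [Finset.sum_congr rfl hterm, ← Finset.mul_sum, key_identity σ k hk x0, hσx]
  -- RHS
  have hGyk : Real.Gamma (y0 + k) = (∏ i ∈ range (k-1), ((y0+1) + i)) * Real.Gamma (y0 + 1) := by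
    have h1 : y0 + (k:ℝ) = (y0 + 1) + ((k-1:ℕ):ℝ) := by
      have : k = (k-1)+1 := by omega
      rw [this]; push_cast; ring
    rw [h1, Gamma_shift (y0+1) hy1 (k-1)]
  rw [hGyk, hGk]
  have hprod2 : ∏ i ∈ range (k-1), (y0 + ((i:ℝ)+1)) = ∏ i ∈ range (k-1), ((y0+1) + (i:ℝ)) :=
    Finset.prod_congr rfl fun i _ => by ring
  rw [hprod2]
  have hkf : (((k-1).factorial : ℕ) : ℝ) ≠ 0 := by positivity
  field_simp
end

section
/- For β ∈ (0,1) and positive integers n ≥ k ≥ 1, the n-th derivative of λ ↦ e^{-λ^β} satisfies (-1)^n (d^n/dλ^n) e^{-λ^β} = e^{-λ^β} ∑_{k=1}^{n} β^k S_β(n,k) λ^{kβ - n} for λ > 0, where S_β(n,k) = (1/(β^k k!)) ∑_{j=1}^k (-1)^j C(k,j)(-jβ)_n is the generalized Stirling number of the second kind. -/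
open Finset

lemma rf_succ (x : ℝ) (n : ℕ) :
    risingFactorial x (n+1) = risingFactorial x n * (x + n) :=
  Finset.prod_range_succ _ _

lemma sum_Icc_one {M : Type*} [AddCommMonoid M] (m : ℕ) (f : ℕ → M) :
    ∑ k ∈ Icc 1 m, f k = ∑ i ∈ range m, f (i+1) := by
  rw [← Finset.Ico_add_one_right_eq_Icc, Finset.sum_Ico_eq_sum_range]
  simp [add_comm]

lemma genStirling_zero_right (σ : ℝ) (n : ℕ) : genStirling σ n 0 = 0 := by
  simp [genStirling]

lemma key_sum (β : ℝ) (n k : ℕ) :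
    ∑ j ∈ Icc 1 (k+1), (-1:ℝ)^j * (Nat.choose (k+1) j : ℝ) *
        risingFactorial (-(j*β)) n * (((k:ℝ)+1)*β - j*β)
      = β * ((k:ℝ)+1) *
        ∑ j ∈ Icc 1 k, (-1:ℝ)^j * (Nat.choose k j : ℝ) * risingFactorial (-(j*β)) n := by
  rw [Finset.sum_Icc_succ_top (by omega : 1 ≤ k+1), Finset.mul_sum]
  have htop : (-1:ℝ)^(k+1) * (Nat.choose (k+1) (k+1) : ℝ) *
      risingFactorial (-(((k+1:ℕ):ℝ)*β)) n * (((k:ℝ)+1)*β - ((k+1:ℕ):ℝ)*β) = 0 := by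
    push_cast; ring
  rw [htop, add_zero]
  refine Finset.sum_congr rfl fun j hj => ?_
  have hj' : j ≤ k := (Finset.mem_Icc.mp hj).2
  have hch : ((k+1).choose j : ℝ) * (((k:ℝ)+1) - j) = ((k:ℝ)+1) * (k.choose j : ℝ) := by
    have h := Nat.choose_mul_succ_eq k j
    have hcast := congrArg (Nat.cast (R := ℝ)) h
    push_cast [Nat.cast_sub (by omega : j ≤ k + 1)] at hcast
    linarith
  have : ((k:ℝ)+1)*β - (j:ℝ)*β = β * (((k:ℝ)+1) - j) := by ring
  rw [this]
  linear_combination ((-1:ℝ)^j * risingFactorial (-((j:ℝ)*β)) n * β) * hch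

lemma genStirling_rec (β : ℝ) (hβ : β ≠ 0) (n k : ℕ) :
    genStirling β (n+1) (k+1)
      = genStirling β n k + ((n:ℝ) - ((k:ℝ)+1)*β) * genStirling β n (k+1) := by
  have hP : ∑ j ∈ Icc 1 (k+1), (-1:ℝ)^j * (Nat.choose (k+1) j : ℝ) *
        risingFactorial (-((j:ℝ)*β)) (n+1)
      = β * ((k:ℝ)+1) *
          (∑ j ∈ Icc 1 k, (-1:ℝ)^j * (Nat.choose k j : ℝ) * risingFactorial (-((j:ℝ)*β)) n)
        + ((n:ℝ) - ((k:ℝ)+1)*β) *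
          ∑ j ∈ Icc 1 (k+1), (-1:ℝ)^j * (Nat.choose (k+1) j : ℝ) *
            risingFactorial (-((j:ℝ)*β)) n := by
    rw [← key_sum β n k, Finset.mul_sum, ← Finset.sum_add_distrib]
    refine Finset.sum_congr rfl fun j hj => ?_
    rw [rf_succ]
    ring
  rw [genStirling, genStirling, genStirling, hP]
  have hfac : ((Nat.factorial (k+1) : ℕ) : ℝ) = ((k:ℝ)+1) * (Nat.factorial k : ℝ) := by
    push_cast [Nat.factorial_succ]; ring
  have h1 : (Nat.factorial k : ℝ) ≠ 0 := Nat.cast_ne_zero.mpr (Nat.factorial_ne_zero k)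
  have h2 : ((k:ℝ)+1) ≠ 0 := by positivity
  have h3 : (β : ℝ)^k ≠ 0 := pow_ne_zero _ hβ
  rw [hfac]
  field_simp
  ring

lemma alt_sum_choose (r : ℕ) (hr : r ≠ 0) :
    ∑ i ∈ range (r+1), (-1:ℝ)^i * (Nat.choose r i : ℝ) = 0 := by
  have h := Int.alternating_sum_range_choose (n := r)
  rw [if_neg hr] at h
  exact_mod_cast congrArg (fun z : ℤ => (z : ℝ)) h

lemma genStirling_one_high (β : ℝ) (m : ℕ) (hm : 2 ≤ m) : genStirling β 1 m = 0 := by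
  obtain ⟨r, rfl⟩ : ∃ r, m = r + 1 := ⟨m - 1, by omega⟩
  have hr : r ≠ 0 := by omega
  rw [genStirling]
  have hsum : ∑ j ∈ Icc 1 (r+1), (-1:ℝ)^j * (Nat.choose (r+1) j : ℝ) *
      risingFactorial (-((j:ℝ)*β)) 1 = 0 := by
    rw [sum_Icc_one]
    calc ∑ i ∈ range (r+1), (-1:ℝ)^(i+1) * (Nat.choose (r+1) (i+1) : ℝ) *
          risingFactorial (-(((i+1:ℕ):ℝ)*β)) 1
        = ∑ i ∈ range (r+1), (β * ((r:ℝ)+1)) * ((-1:ℝ)^i * (Nat.choose r i : ℝ)) := by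
          refine Finset.sum_congr rfl fun i hi => ?_
          have hch : ((i:ℝ)+1) * ((r+1).choose (i+1) : ℝ) = ((r:ℝ)+1) * (r.choose i : ℝ) := by
            have h := Nat.add_one_mul_choose_eq r i
            have h2 := congrArg (Nat.cast (R := ℝ)) h
            push_cast at h2
            linarith
          simp only [risingFactorial, Finset.prod_range_one]
          push_cast
          linear_combination ((-1:ℝ)^i * β) * hch
      _ = 0 := by rw [← Finset.mul_sum, alt_sum_choose r hr, mul_zero]
  rw [hsum, mul_zero]

lemma genStirling_high (β : ℝ) (hβ : β ≠ 0) :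
    ∀ n, 1 ≤ n → ∀ k, n < k → genStirling β n k = 0 := by
  intro n hn
  induction n, hn using Nat.le_induction with
  | base => intro k hk; exact genStirling_one_high β k (by omega)
  | succ n hn ih =>
    intro k hk
    obtain ⟨j, rfl⟩ : ∃ j, k = j + 1 := ⟨k - 1, by omega⟩
    rw [genStirling_rec β hβ n j, ih j (by omega), ih (j+1) (by omega)]
    ring

lemma sum_step (β : ℝ) (hβ : β ≠ 0) (l : ℝ) (n : ℕ) (hn : 1 ≤ n) :
    ∑ k ∈ Icc 1 (n+1), β ^ k * genStirling β (n+1) k * l ^ ((k:ℝ)*β - ((n:ℝ)+1))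
      = ∑ k ∈ Icc 1 n, β ^ (k+1) * genStirling β n k * l ^ ((((k:ℝ)+1))*β - ((n:ℝ)+1))
        + ∑ k ∈ Icc 1 n, β ^ k * (((n:ℝ) - (k:ℝ)*β) * genStirling β n k) * l ^ ((k:ℝ)*β - ((n:ℝ)+1)) := by
  rw [sum_Icc_one (n+1), sum_Icc_one n, sum_Icc_one n]
  have hsplit : ∀ i ∈ range (n+1),
      β ^ (i+1) * genStirling β (n+1) (i+1) * l ^ ((((i+1:ℕ)):ℝ)*β - ((n:ℝ)+1))
      = β ^ (i+1) * genStirling β n i * l ^ ((((i+1:ℕ)):ℝ)*β - ((n:ℝ)+1))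
        + β ^ (i+1) * (((n:ℝ) - (((i+1:ℕ)):ℝ)*β) * genStirling β n (i+1)) *
            l ^ ((((i+1:ℕ)):ℝ)*β - ((n:ℝ)+1)) := by
    intro i hi
    rw [genStirling_rec β hβ n i]
    push_cast
    ring
  rw [Finset.sum_congr rfl hsplit, Finset.sum_add_distrib]
  congr 1
  · rw [Finset.sum_range_succ']
    simp only [genStirling_zero_right, mul_zero, zero_mul, add_zero]
    refine Finset.sum_congr rfl fun i hi => ?_
    norm_num
  · rw [Finset.sum_range_succ, genStirling_high β hβ n hn (n+1) (by omega)]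
    simp only [mul_zero, zero_mul, add_zero]

lemma hasDerivAt_exp_neg_rpow (β l : ℝ) (hl : 0 < l) :
    HasDerivAt (fun x : ℝ => Real.exp (-(x ^ β)))
      (Real.exp (-(l ^ β)) * (-(β * l ^ (β - 1)))) l := by
  have h1 : HasDerivAt (fun x : ℝ => x ^ β) (β * l ^ (β - 1)) l := by
    simpa [mul_comm] using Real.hasDerivAt_rpow_const (x := l) (p := β) (Or.inl hl.ne')
  exact h1.neg.exp

lemma hasDerivAt_sum_part (β : ℝ) (n : ℕ) (l : ℝ) (hl : 0 < l) :
    HasDerivAt (fun x : ℝ => ∑ k ∈ Icc 1 n, β ^ k * genStirling β n k * x ^ ((k:ℝ)*β - n))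
      (∑ k ∈ Icc 1 n, β ^ k * genStirling β n k * (((k:ℝ)*β - n) * l ^ ((k:ℝ)*β - n - 1))) l := by
  refine HasDerivAt.fun_sum fun k hk => ?_
  have h := Real.hasDerivAt_rpow_const (x := l) (p := (k:ℝ)*β - n) (Or.inl hl.ne')
  simpa [mul_assoc] using h.const_mul (β ^ k * genStirling β n k)

theorem aux_main (β : ℝ) (hβ0 : 0 < β) (hβ1 : β < 1)
    (n : ℕ) (hn : 1 ≤ n) :
    ∀ l : ℝ, 0 < l →
      iteratedDeriv n (fun x : ℝ => Real.exp (-(x ^ β))) l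
        = (-1 : ℝ) ^ n * (Real.exp (-(l ^ β)) *
            ∑ k ∈ Finset.Icc 1 n, β ^ k * genStirling β n k * l ^ ((k : ℝ) * β - n)) := by
  induction n, hn using Nat.le_induction with
  | base =>
    intro l hl
    rw [iteratedDeriv_one]
    rw [(hasDerivAt_exp_neg_rpow β l hl).deriv]
    have hS : genStirling β 1 1 = 1 := by
      simp [genStirling, risingFactorial]
      field_simp
    simp [hS]
  | succ n hn ih =>
    intro l hl
    rw [iteratedDeriv_succ]
    have heq : (iteratedDeriv n (fun x : ℝ => Real.exp (-(x ^ β))))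
        =ᶠ[nhds l] (fun x : ℝ => (-1 : ℝ) ^ n * (Real.exp (-(x ^ β)) *
            ∑ k ∈ Finset.Icc 1 n, β ^ k * genStirling β n k * x ^ ((k : ℝ) * β - n))) := by
      filter_upwards [isOpen_Ioi.mem_nhds hl] with x hx
      exact ih x hx
    rw [heq.deriv_eq]
    have hE := hasDerivAt_exp_neg_rpow β l hl
    have hS := hasDerivAt_sum_part β n l hl
    have hD := ((hE.fun_mul hS).const_mul ((-1:ℝ)^n))
    rw [hD.deriv]
    -- now algebra
    have hstep := sum_step β hβ0.ne' l n hn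
    have hcast : ((n+1:ℕ):ℝ) = (n:ℝ) + 1 := by push_cast; ring
    rw [show ∑ k ∈ Finset.Icc 1 (n+1), β ^ k * genStirling β (n+1) k * l ^ ((k : ℝ) * β - ((n+1:ℕ):ℝ))
        = ∑ k ∈ Icc 1 (n+1), β ^ k * genStirling β (n+1) k * l ^ ((k:ℝ)*β - ((n:ℝ)+1)) by rw [hcast]]
    rw [hstep, pow_succ, Finset.mul_sum, Finset.mul_sum]
    have key : ∀ i ∈ Icc 1 n,
        Real.exp (-l ^ β) * -(β * l ^ (β - 1)) * (β ^ i * genStirling β n i * l ^ ((i:ℝ) * β - n)) +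
          Real.exp (-l ^ β) * (β ^ i * genStirling β n i * (((i:ℝ) * β - n) * l ^ ((i:ℝ) * β - n - 1)))
        = -(Real.exp (-l ^ β) * (β ^ (i+1) * genStirling β n i * l ^ (((i:ℝ) + 1) * β - ((n:ℝ) + 1)) +
            β ^ i * (((n:ℝ) - (i:ℝ) * β) * genStirling β n i) * l ^ ((i:ℝ) * β - ((n:ℝ) + 1)))) := by
      intro i hi
      have h1 : l ^ (β - 1) * l ^ ((i:ℝ) * β - (n:ℝ)) = l ^ (((i:ℝ)+1)*β - ((n:ℝ)+1)) := by
        rw [← Real.rpow_add hl]; ring_nf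
      have h2 : l ^ ((i:ℝ) * β - (n:ℝ) - 1) = l ^ ((i:ℝ)*β - ((n:ℝ)+1)) := by ring_nf
      rw [← h1, h2, pow_succ]; ring
    rw [← Finset.sum_add_distrib, Finset.sum_congr rfl key, Finset.sum_neg_distrib,
      ← Finset.mul_sum, Finset.sum_add_distrib]
    ring


/-- Derivatives of the stable Laplace exponent:
`(-1)^n (d^n/dλ^n) e^{-λ^β} = e^{-λ^β} ∑_{k=1}^n β^k S_β(n,k) λ^{kβ-n}` for `λ > 0`. -/
theorem iteratedDeriv_stable_laplace (β : ℝ) (hβ0 : 0 < β) (hβ1 : β < 1)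
    (n : ℕ) (hn : 1 ≤ n) :
    ∀ l : ℝ, 0 < l →
      (-1 : ℝ) ^ n * iteratedDeriv n (fun x : ℝ => Real.exp (-(x ^ β))) l
        = Real.exp (-(l ^ β)) *
            ∑ k ∈ Finset.Icc 1 n, β ^ k * genStirling β n k * l ^ ((k : ℝ) * β - n) := by
  intro l hl
  rw [aux_main β hβ0 hβ1 n hn l hl, ← mul_assoc, ← pow_add]
  rw [Even.neg_one_pow ⟨n, by ring⟩, one_mul]
end
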